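/- Identify each Dyck path with its infinite binary word (the path's steps as 1's and 0's followed by infinitely many 0's). For Dyck paths D and E with words (d_i) and (e_i), D ≤ E in the transitive-reflexive closure of the ribbon-addition relation ⊏ if and only if d_i ≤ e_i for all i. -/

import Mathlib

/-- A Dyck word: every prefix has at least as many up steps (`true`) as down
steps (`false`), and the total numbers of up and down steps are equal. -/
def IsDyck (w : List Bool) : Prop :=
  (∀ p : ℕ, (w.take p).count false ≤ (w.take p).count true) ∧
    w.count false = w.count true

/-- Ribbon addition: `E` is obtained from `D ++ [false, false]` by changing a
single down step, other than the last one, into an up step. -/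
def Ribbon (D E : List Bool) : Prop :=
  ∃ k, k < D.length + 1 ∧ (D ++ [false, false])[k]? = some false ∧
    E = (D ++ [false, false]).set k true

/-- The infinite binary word of a Dyck path: its steps (`true` = 1 = up,
`false` = 0 = down) followed by infinitely many 0's. -/
def wordOf (w : List Bool) : ℕ → Bool := fun i => w.getD i false

namespace DyckAux

def S (w : List Bool) (p : ℕ) : ℕ := ∑ i ∈ Finset.range p, (wordOf w i).toNat

lemma wordOf_eq_false {w : List Bool} {i : ℕ} (h : w.length ≤ i) : wordOf w i = false :=
  List.getD_eq_default w false h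

lemma wordOf_lt {w : List Bool} {i : ℕ} (h : i < w.length) : wordOf w i = w[i] :=
  List.getD_eq_getElem w false h

lemma wordOf_true_lt {w : List Bool} {i : ℕ} (h : wordOf w i = true) : i < w.length := by
  by_contra hc
  rw [wordOf_eq_false (by omega)] at h
  exact absurd h (by simp)

lemma count_true_eq : ∀ (w : List Bool) (n : ℕ), w.length ≤ n → w.count true = S w n := by
  intro w
  induction w with
  | nil => intro n _; simp [S, wordOf]
  | cons a t ih =>
    intro n hn
    simp only [List.length_cons] at hn
    obtain ⟨m, rfl⟩ : ∃ m, n = m + 1 := ⟨n - 1, by omega⟩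
    rw [S, Finset.sum_range_succ']
    have h0 : wordOf (a :: t) 0 = a := rfl
    have hs : ∀ i, wordOf (a :: t) (i + 1) = wordOf t i := fun i => rfl
    simp only [hs, h0]
    rw [← S, ← ih m (by omega)]
    cases a <;> simp [List.count_cons]

lemma count_false_add (l : List Bool) : l.count false + l.count true = l.length := by
  induction l with
  | nil => simp
  | cons a t ih => cases a <;> simp [List.count_cons] <;> omega

lemma wordOf_take {w : List Bool} {p i : ℕ} (h : i < p) : wordOf (w.take p) i = wordOf w i := by
  simp [wordOf, List.getD_eq_getElem?_getD, List.getElem?_take, h]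

lemma count_take (w : List Bool) (p : ℕ) : (w.take p).count true = S w p := by
  rw [count_true_eq (w.take p) p (by simp)]
  exact Finset.sum_congr rfl fun i hi => by rw [wordOf_take (Finset.mem_range.mp hi)]

lemma S_length_le {w : List Bool} {p : ℕ} (h : w.length ≤ p) : S w p = S w w.length := by
  rw [← count_true_eq w p h, count_true_eq w w.length le_rfl]

lemma dyck_total {w : List Bool} (h : IsDyck w) : w.length = 2 * S w w.length := by
  have h1 := count_false_add w
  have h2 := h.2
  have h3 := count_true_eq w w.length le_rfl
  omega

lemma dyck_prefix {w : List Bool} (h : IsDyck w) {p : ℕ} (hp : p ≤ w.length) :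
    p ≤ 2 * S w p := by
  have h1 := count_false_add (w.take p)
  have h2 := h.1 p
  have h3 := count_take w p
  have h4 : (w.take p).length = p := by simp [hp]
  omega

lemma dyck_of {w : List Bool} (hpre : ∀ p ≤ w.length, p ≤ 2 * S w p)
    (htot : w.length = 2 * S w w.length) : IsDyck w := by
  constructor
  · intro p
    rcases le_or_gt p w.length with hp | hp
    · have := hpre p hp
      have h1 := count_false_add (w.take p)
      have h3 := count_take w p
      have h4 : (w.take p).length = p := by simp [hp]
      omega
    · rw [List.take_of_length_le (le_of_lt hp)]
      have h1 := count_false_add w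
      have h3 := count_true_eq w w.length le_rfl
      omega
  · have h1 := count_false_add w
    have h3 := count_true_eq w w.length le_rfl
    omega

lemma toNat_mono : ∀ {a b : Bool}, a ≤ b → a.toNat ≤ b.toNat := by decide

lemma toNat_inj : ∀ {a b : Bool}, a.toNat = b.toNat → a = b := by decide

lemma S_mono {D E : List Bool} (h : ∀ i, wordOf D i ≤ wordOf E i) (p : ℕ) : S D p ≤ S E p :=
  Finset.sum_le_sum fun i _ => toNat_mono (h i)

lemma length_le {D E : List Bool} (hD : IsDyck D) (hE : IsDyck E)
    (hw : ∀ i, wordOf D i ≤ wordOf E i) : D.length ≤ E.length := by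
  have h1 := dyck_total hD
  have h2 := dyck_total hE
  have h3 := S_mono hw (max D.length E.length)
  have h4 := S_length_le (w := D) (le_max_left D.length E.length)
  have h5 := S_length_le (w := E) (le_max_right D.length E.length)
  omega

lemma eq_of_length_eq {D E : List Bool} (hD : IsDyck D) (hE : IsDyck E)
    (hw : ∀ i, wordOf D i ≤ wordOf E i) (hlen : D.length = E.length) : D = E := by
  have h1 := dyck_total hD
  have h2 := dyck_total hE
  have h3 : S D E.length = S D D.length := by rw [hlen]
  have hs : S D E.length = S E E.length := by omega
  have hpt : ∀ i ∈ Finset.range E.length, (wordOf D i).toNat = (wordOf E i).toNat := by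
    rw [← Finset.sum_eq_sum_iff_of_le fun i _ => toNat_mono (hw i)]
    exact hs
  apply List.ext_getElem hlen
  intro i hi1 hi2
  have := hpt i (Finset.mem_range.mpr hi2)
  rw [wordOf_lt hi1, wordOf_lt hi2] at this
  exact toNat_inj this


lemma elem_ff : ∀ (j : ℕ) (h : j < ([false, false] : List Bool).length), ([false, false] : List Bool)[j] = false := by
  decide

lemma descent {D E : List Bool} (hD : IsDyck D) (hE : IsDyck E)
    (hw : ∀ i, wordOf D i ≤ wordOf E i) (hlt : D.length < E.length) :
    ∃ E', IsDyck E' ∧ (∀ i, wordOf D i ≤ wordOf E' i) ∧ Ribbon E' E ∧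
      E'.length + 2 = E.length := by
  have hSE := dyck_total hE
  have hSD := dyck_total hD
  have hDN : S D E.length = S D D.length := S_length_le (le_of_lt hlt)
  have hSlt : S D E.length < S E E.length := by omega
  obtain ⟨i0, hi0mem, hi0⟩ := Finset.exists_lt_of_sum_lt hSlt
  have hP0 : wordOf E i0 = true ∧ wordOf D i0 = false := by
    cases hd : wordOf D i0 <;> cases he : wordOf E i0 <;> simp [hd, he] at hi0 ⊢
  classical
  set P : ℕ → Prop := fun j => wordOf E j = true ∧ wordOf D j = false with hPdef
  set k := Nat.findGreatest P E.length with hk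
  have hPk : P k := Nat.findGreatest_spec (le_of_lt (Finset.mem_range.mp hi0mem)) hP0
  have hbeyond : ∀ j, k < j → wordOf E j = wordOf D j := by
    intro j hj
    cases he : wordOf E j
    · have := hw j
      cases hd : wordOf D j
      · rfl
      · rw [hd, he] at this; exact absurd this (by decide)
    · have hjNE : j < E.length := wordOf_true_lt he
      cases hd : wordOf D j
      · exact absurd ⟨he, hd⟩ (Nat.findGreatest_is_greatest hj (le_of_lt hjNE))
      · rfl
  have hkNE : k < E.length := wordOf_true_lt hPk.1
  have hNE2 : 2 ≤ E.length := by omega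
  have hDn : D.length ≤ E.length - 2 := by omega
  have hknot : k ≠ E.length - 1 := by
    intro hkeq
    obtain ⟨m, hm⟩ : ∃ m, E.length = m + 1 := ⟨E.length - 1, by omega⟩
    have hpre := dyck_prefix hE (p := m) (by omega)
    have hsum : S E E.length = S E m + (wordOf E m).toNat := by
      rw [S, S, hm, Finset.sum_range_succ]
    have hEm : wordOf E m = true := by
      have := hPk.1; rwa [hkeq, hm, Nat.add_sub_cancel] at this
    rw [hEm] at hsum
    simp at hsum
    omega
  have hkn : k ≤ E.length - 2 := by omega
  have hkey : ∀ p, k < p → p ≤ E.length →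
      S E p + S D E.length = S E E.length + S D p := by
    intro p hp1 hp2
    have hsplit : ∀ (w : List Bool),
        S w p + ∑ i ∈ Finset.Ico p E.length, (wordOf w i).toNat = S w E.length := by
      intro w
      rw [S, S, Finset.range_eq_Ico, Finset.sum_Ico_consecutive _ (Nat.zero_le p) hp2, Finset.range_eq_Ico]
    have heq : ∑ i ∈ Finset.Ico p E.length, (wordOf E i).toNat
        = ∑ i ∈ Finset.Ico p E.length, (wordOf D i).toNat := by
      refine Finset.sum_congr rfl fun i hi => ?_
      rw [hbeyond i (by have := (Finset.mem_Ico.mp hi).1; omega)]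
    have h1 := hsplit E
    have h2 := hsplit D
    omega
  have hEfalse : ∀ j, k < j → D.length ≤ j → wordOf E j = false :=
    fun j h1 h2 => (hbeyond j h1).trans (wordOf_eq_false h2)
  set E' := (E.set k false).take (E.length - 2) with hE'
  have hlenE' : E'.length = E.length - 2 := by
    rw [hE', List.length_take, List.length_set]; omega
  -- the word of E'
  have hwne : ∀ i, i ≠ k → wordOf E' i = wordOf E i := by
    intro i hik
    rcases lt_or_ge i (E.length - 2) with hi | hi
    · rw [hE', wordOf_take hi, wordOf, wordOf, List.getD_eq_getElem?_getD,
        List.getD_eq_getElem?_getD, List.getElem?_set_ne (by omega)]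
    · rw [wordOf_eq_false (by omega), hEfalse i (by omega) (by omega)]
  have hwk : wordOf E' k = false := by
    rcases lt_or_ge k (E.length - 2) with hkc | hkc
    · rw [hE', wordOf_take hkc, wordOf, List.getD_eq_getElem?_getD,
        List.getElem?_set_self (by omega)]
      rfl
    · exact wordOf_eq_false (by omega)
  -- S for E'
  have hS_le : ∀ p, p ≤ k → S E' p = S E p := by
    intro p hp
    exact Finset.sum_congr rfl fun i hi => by
      rw [hwne i (by have := Finset.mem_range.mp hi; omega)]
  have hS_gt : ∀ p, k < p → S E' p + 1 = S E p := by
    intro p hp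
    have hkmem : k ∈ Finset.range p := Finset.mem_range.mpr hp
    have h1 : S E p = (wordOf E k).toNat + ∑ i ∈ (Finset.range p).erase k, (wordOf E i).toNat :=
      (Finset.add_sum_erase _ _ hkmem).symm
    have h2 : S E' p = (wordOf E' k).toNat + ∑ i ∈ (Finset.range p).erase k, (wordOf E' i).toNat :=
      (Finset.add_sum_erase _ _ hkmem).symm
    have h3 : ∑ i ∈ (Finset.range p).erase k, (wordOf E' i).toNat
        = ∑ i ∈ (Finset.range p).erase k, (wordOf E i).toNat :=
      Finset.sum_congr rfl fun i hi => by rw [hwne i (Finset.mem_erase.mp hi).1]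
    rw [hPk.1] at h1
    rw [hwk] at h2
    simp at h1 h2
    omega
  have hSgtNE := hS_gt E.length hkNE
  have htotE' : E'.length = 2 * S E' E'.length := by
    have h4 : S E' E.length = S E' E'.length := S_length_le (by omega)
    omega
  have hpreE' : ∀ p ≤ E'.length, p ≤ 2 * S E' p := by
    intro p hp
    rw [hlenE'] at hp
    rcases le_or_gt p k with hpk | hpk
    · rw [hS_le p hpk]
      exact dyck_prefix hE (by omega)
    · have h5 := hS_gt p hpk
      have h6 := hkey p hpk (by omega)
      rcases le_or_gt p D.length with hpd | hpd
      · have h7 := dyck_prefix hD hpd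
        omega
      · have h8 : S D p = S D D.length := S_length_le (le_of_lt hpd)
        omega
  have hE'dyck : IsDyck E' := dyck_of hpreE' htotE'
  refine ⟨E', hE'dyck, ?_, ?_, by omega⟩
  · intro i
    by_cases hik : i = k
    · rw [hik, hPk.2]; exact Bool.false_le _
    · rw [hwne i hik]; exact hw i
  · refine ⟨k, by omega, ?_, ?_⟩
    · rcases lt_or_ge k (E.length - 2) with hkc | hkc
      · rw [List.getElem?_append_left (by omega)]
        rw [List.getElem?_eq_getElem (by omega), ← wordOf_lt (by omega), hwk]
      · have hkeq : k = E.length - 2 := by omega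
        rw [List.getElem?_append_right (by omega), hlenE', hkeq]
        simp
    · apply List.ext_getElem (by simp [hlenE']; omega)
      intro i h1 h2
      rw [List.getElem_set]
      by_cases hik : k = i
      · rw [if_pos hik, ← wordOf_lt h1, ← hik, hPk.1]
      · rw [if_neg hik]
        rcases lt_or_ge i (E.length - 2) with hi | hi
        · rw [List.getElem_append_left (by omega), ← wordOf_lt h1,
            ← hwne i (fun h => hik h.symm)]
          exact wordOf_lt (by omega)
        · rw [List.getElem_append_right (by omega)]
          rw [← wordOf_lt h1, hEfalse i (by omega) (by omega)]
          exact (elem_ff _ (by simp at h2 ⊢; omega)).symm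


lemma ribbon_mono {X Y : List Bool} (h : Ribbon X Y) (i : ℕ) :
    wordOf X i ≤ wordOf Y i := by
  obtain ⟨k, hk, hkf, rfl⟩ := h
  cases hx : wordOf X i
  · exact Bool.false_le _
  · have hi : i < X.length := wordOf_true_lt hx
    have hilen : i < ((X ++ [false, false]).set k true).length := by simp; omega
    rw [wordOf_lt hilen, List.getElem_set]
    by_cases hik : k = i
    · simp [hik]
    · rw [if_neg hik, List.getElem_append_left hi, ← wordOf_lt hi, hx]

lemma back : ∀ (N : ℕ) (D E : List Bool), E.length ≤ N → IsDyck D → IsDyck E →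
    (∀ i, wordOf D i ≤ wordOf E i) →
    Relation.ReflTransGen (fun X Y => IsDyck X ∧ IsDyck Y ∧ Ribbon X Y) D E := by
  intro N
  induction N with
  | zero =>
    intro D E hle hD hE hw
    have hDE := length_le hD hE hw
    exact eq_of_length_eq hD hE hw (by omega) ▸ Relation.ReflTransGen.refl
  | succ N ih =>
    intro D E hle hD hE hw
    rcases eq_or_lt_of_le (length_le hD hE hw) with heq | hlt
    · exact eq_of_length_eq hD hE hw heq ▸ Relation.ReflTransGen.refl
    · obtain ⟨E', hE'dyck, hw', hrib, hlen⟩ := descent hD hE hw hlt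
      exact (ih D E' (by omega) hD hE'dyck hw').tail ⟨hE'dyck, hE, hrib⟩

end DyckAux

/-- For Dyck paths `D` and `E` with infinite binary words `(d_i)`, `(e_i)`, we
have `D ≤ E` in the reflexive-transitive closure of the ribbon-addition
relation `⊏` if and only if `d_i ≤ e_i` for all `i`. -/
theorem dyck_order_iff_componentwise (D E : List Bool)
    (hD : IsDyck D) (hE : IsDyck E) :
    Relation.ReflTransGen (fun X Y => IsDyck X ∧ IsDyck Y ∧ Ribbon X Y) D E ↔
      ∀ i : ℕ, wordOf D i ≤ wordOf E i := by
  constructor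
  · intro h i
    induction h with
    | refl => exact le_rfl
    | tail h1 h2 ih => exact le_trans (ih h2.1) (DyckAux.ribbon_mono h2.2.2 i)
  · intro hw
    exact DyckAux.back E.length D E le_rfl hD hE hw
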